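/- Let V be a symmetric monoidal closed category and let E be a class of morphisms of V such that for every object V₀ of V and every e ∈ E, the whiskering V₀ ◁ e (i.e. id_{V₀} ⊗ e) again belongs to E. Then for every morphism m of V, the following are equivalent: (a) every member of E is V-orthogonal to m; (b) every member of E is ordinarily orthogonal to m. -/
import Mathlib

open CategoryTheory MonoidalCategory

/-- `e` is `V`-orthogonal to `m` when the internal-hom square of `(e, m)` is a
pullback in `V`. -/
def VOrthogonal {V : Type*} [Category V] [MonoidalCategory V] [SymmetricCategory V]
    [MonoidalClosed V] {A₁ A₂ B₁ B₂ : V} (e : A₁ ⟶ A₂) (m : B₁ ⟶ B₂) : Prop :=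
  IsPullback ((MonoidalClosed.pre e).app B₁) ((ihom A₂).map m)
    ((ihom A₁).map m) ((MonoidalClosed.pre e).app B₂)

/-- `e` is ordinarily orthogonal to `m`: every commutative square from `e` to `m`
admits a unique diagonal filler. -/
def OrdOrthogonal {C : Type*} [Category C]
    {A₁ A₂ B₁ B₂ : C} (e : A₁ ⟶ A₂) (m : B₁ ⟶ B₂) : Prop :=
  ∀ (u : A₁ ⟶ B₁) (v : A₂ ⟶ B₂), u ≫ m = e ≫ v →
    ∃! d : A₂ ⟶ B₁, e ≫ d = u ∧ d ≫ m = v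

section Aux

variable {V : Type*} [Category V] [MonoidalCategory V] [MonoidalClosed V]

lemma aux_uncurry_comp_pre {A₁ A₂ X Y : V} (e : A₁ ⟶ A₂) (g : X ⟶ (ihom A₂).obj Y) :
    MonoidalClosed.uncurry (g ≫ (MonoidalClosed.pre e).app Y) =
      (e ▷ X) ≫ MonoidalClosed.uncurry g := by
  rw [MonoidalClosed.uncurry_eq, MonoidalClosed.uncurry_eq, MonoidalCategory.whiskerLeft_comp]
  slice_lhs 2 3 => rw [MonoidalClosed.id_tensor_pre_app_comp_ev]
  slice_lhs 1 2 => rw [whisker_exchange]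
  simp [Category.assoc]

omit [MonoidalCategory V] [MonoidalClosed V] in
lemma aux_ord_iso {A₁ A₂ A₁' A₂' B₁ B₂ : V} (i : A₁' ≅ A₁) (j : A₂ ≅ A₂')
    (e : A₁ ⟶ A₂) (m : B₁ ⟶ B₂) (h : OrdOrthogonal e m) :
    OrdOrthogonal (i.hom ≫ e ≫ j.hom) m := by
  intro u v huv
  obtain ⟨d, ⟨hd1, hd2⟩, hdu⟩ := h (i.inv ≫ u) (j.hom ≫ v) (by
    rw [Category.assoc, huv]; simp)
  refine ⟨j.inv ≫ d, ⟨?_, ?_⟩, ?_⟩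
  · simp only [Category.assoc, Iso.hom_inv_id_assoc]
    rw [hd1]; simp
  · simp [hd2]
  · intro d' ⟨h1, h2⟩
    have := hdu (j.hom ≫ d') ⟨by
      simp only [Category.assoc] at h1 ⊢
      rw [← h1]; simp, by simp [h2]⟩
    rw [← this]; simp

end Aux

/-- If a class `E` of morphisms of a symmetric monoidal closed category `V` is stable
under whiskering on the left by objects of `V`, then for every morphism `m`,
`V`-orthogonality of every member of `E` to `m` is equivalent to ordinary orthogonality
of every member of `E` to `m`. -/
theorem stmt_6 {V : Type*} [Category V] [MonoidalCategory V] [SymmetricCategory V]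
    [MonoidalClosed V] (E : MorphismProperty V)
    (hE : ∀ (V₀ : V) {A₁ A₂ : V} (e : A₁ ⟶ A₂), E e → E (V₀ ◁ e))
    {B₁ B₂ : V} (m : B₁ ⟶ B₂) :
    (∀ {A₁ A₂ : V} (e : A₁ ⟶ A₂), E e → VOrthogonal e m) ↔
    (∀ {A₁ A₂ : V} (e : A₁ ⟶ A₂), E e → OrdOrthogonal e m) := by
  constructor
  · -- V-orthogonality implies ordinary orthogonality
    intro hV A₁ A₂ e he u v huv
    have hp : VOrthogonal e m := hV e he
    set h : 𝟙_ V ⟶ (ihom A₁).obj B₁ := MonoidalClosed.curry ((ρ_ A₁).hom ≫ u) with hdef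
    set k : 𝟙_ V ⟶ (ihom A₂).obj B₂ := MonoidalClosed.curry ((ρ_ A₂).hom ≫ v) with kdef
    have hw : h ≫ (ihom A₁).map m = k ≫ (MonoidalClosed.pre e).app B₂ := by
      apply MonoidalClosed.uncurry_injective
      rw [MonoidalClosed.uncurry_natural_right, aux_uncurry_comp_pre, hdef, kdef,
        MonoidalClosed.uncurry_curry, MonoidalClosed.uncurry_curry,
        MonoidalCategory.rightUnitor_naturality_assoc]
      rw [Category.assoc, huv]
    set l : 𝟙_ V ⟶ (ihom A₂).obj B₁ := hp.lift h k hw with ldef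
    refine ⟨(ρ_ A₂).inv ≫ MonoidalClosed.uncurry l, ⟨?_, ?_⟩, ?_⟩
    · have h1 : l ≫ (MonoidalClosed.pre e).app B₁ = h := hp.lift_fst h k hw
      have := congrArg MonoidalClosed.uncurry h1
      rw [aux_uncurry_comp_pre, hdef, MonoidalClosed.uncurry_curry] at this
      calc e ≫ (ρ_ A₂).inv ≫ MonoidalClosed.uncurry l
          = (ρ_ A₁).inv ≫ (e ▷ 𝟙_ V) ≫ MonoidalClosed.uncurry l := by
            rw [← MonoidalCategory.rightUnitor_inv_naturality_assoc]
        _ = u := by rw [this]; simp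
    · have h2 : l ≫ (ihom A₂).map m = k := hp.lift_snd h k hw
      have := congrArg MonoidalClosed.uncurry h2
      rw [MonoidalClosed.uncurry_natural_right, kdef, MonoidalClosed.uncurry_curry] at this
      rw [Category.assoc, this]; simp
    · intro d' ⟨hd1, hd2⟩
      have hl' : MonoidalClosed.curry ((ρ_ A₂).hom ≫ d') = l := by
        apply hp.hom_ext
        · apply MonoidalClosed.uncurry_injective
          rw [aux_uncurry_comp_pre, MonoidalClosed.uncurry_curry, ldef,
            hp.lift_fst h k hw, hdef, MonoidalClosed.uncurry_curry,
            MonoidalCategory.rightUnitor_naturality_assoc, hd1]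
        · rw [← MonoidalClosed.curry_natural_right, Category.assoc, hd2, ldef,
            hp.lift_snd h k hw, kdef]
      rw [← hl', MonoidalClosed.uncurry_curry]
      simp
  · -- ordinary orthogonality implies V-orthogonality
    intro hOrd A₁ A₂ e he
    have eq0 : (MonoidalClosed.pre e).app B₁ ≫ (ihom A₁).map m
        = (ihom A₂).map m ≫ (MonoidalClosed.pre e).app B₂ :=
      ((MonoidalClosed.pre e).naturality m).symm
    have key : ∀ (T : V) (h : T ⟶ (ihom A₁).obj B₁) (k : T ⟶ (ihom A₂).obj B₂),
        h ≫ (ihom A₁).map m = k ≫ (MonoidalClosed.pre e).app B₂ →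
        ∃! l : T ⟶ (ihom A₂).obj B₁,
          l ≫ (MonoidalClosed.pre e).app B₁ = h ∧ l ≫ (ihom A₂).map m = k := by
      intro T h k hw
      have hOrdW : OrdOrthogonal (e ▷ T) m := by
        have heq : e ▷ T = (β_ A₁ T).hom ≫ (T ◁ e) ≫ (β_ T A₂).hom := by
          rw [BraidedCategory.braiding_naturality_right]
          rw [← Category.assoc, SymmetricCategory.symmetry, Category.id_comp]
        rw [heq]
        exact aux_ord_iso (β_ A₁ T) (β_ T A₂) (T ◁ e) m (hOrd (T ◁ e) (hE T e he))
      have hcond : MonoidalClosed.uncurry h ≫ m = (e ▷ T) ≫ MonoidalClosed.uncurry k := by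
        rw [← MonoidalClosed.uncurry_natural_right, ← aux_uncurry_comp_pre, hw]
      obtain ⟨d, ⟨hd1, hd2⟩, hdu⟩ := hOrdW _ _ hcond
      refine ⟨MonoidalClosed.curry d, ⟨?_, ?_⟩, ?_⟩
      · apply MonoidalClosed.uncurry_injective
        rw [aux_uncurry_comp_pre, MonoidalClosed.uncurry_curry, hd1]
      · rw [← MonoidalClosed.curry_natural_right, hd2, MonoidalClosed.curry_uncurry]
      · intro l ⟨hl1, hl2⟩
        have : MonoidalClosed.uncurry l = d := by
          apply hdu
          constructor
          · rw [← aux_uncurry_comp_pre, hl1]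
          · rw [← MonoidalClosed.uncurry_natural_right, hl2]
        rw [← this, MonoidalClosed.curry_uncurry]
    apply IsPullback.of_isLimit (c := Limits.PullbackCone.mk _ _ eq0)
    exact Limits.PullbackCone.IsLimit.mk eq0
      (fun s => (key s.pt s.fst s.snd s.condition).exists.choose)
      (fun s => (key s.pt s.fst s.snd s.condition).exists.choose_spec.1)
      (fun s => (key s.pt s.fst s.snd s.condition).exists.choose_spec.2)
      (fun s l h1 h2 => ((key s.pt s.fst s.snd s.condition).unique ⟨h1, h2⟩
        (key s.pt s.fst s.snd s.condition).exists.choose_spec))
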